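/- arXiv:2503.04124 — 2 statements merged into one kernel-verified Lean document; each statement's English description precedes it below -/
import Mathlib

section
/- Let G be a triangle-free simple graph on n vertices that contains a Hamiltonian path. Then γ_h(G) ≤ ⌈⌊n/2⌋/3⌉ + ⌈⌈n/2⌉/3⌉. -/
lemma getVert_injOn_aux {V : Type*} {G : SimpleGraph V} {u v : V} (p : G.Walk u v)
    (hp : p.IsPath) : ∀ i j, i ≤ p.length → j ≤ p.length →
    p.getVert i = p.getVert j → i = j := by
  induction p with
  | nil => intro i j hi hj _; simp at hi hj; omega
  | @cons a b c h q ih =>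
    intro i j hi hj heq
    have hq : q.IsPath := hp.of_cons
    have ha : a ∉ q.support := by
      have := hp.support_nodup
      simp at this
      exact this.1
    simp only [SimpleGraph.Walk.length_cons] at hi hj
    match i, j with
    | 0, 0 => rfl
    | 0, j+1 =>
      exfalso
      rw [SimpleGraph.Walk.getVert_zero, SimpleGraph.Walk.getVert_cons_succ] at heq
      exact ha (SimpleGraph.Walk.mem_support_iff_exists_getVert.mpr ⟨j, heq.symm, by omega⟩)
    | i+1, 0 =>
      exfalso
      rw [SimpleGraph.Walk.getVert_zero, SimpleGraph.Walk.getVert_cons_succ] at heq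
      exact ha (SimpleGraph.Walk.mem_support_iff_exists_getVert.mpr ⟨i, heq, by omega⟩)
    | i+1, j+1 =>
      rw [SimpleGraph.Walk.getVert_cons_succ, SimpleGraph.Walk.getVert_cons_succ] at heq
      have := ih hq i j (by omega) (by omega) heq
      omega

/-- A set `S` of vertices is a hop dominating set of `G` if every vertex not in `S`
is at distance exactly 2 from some vertex of `S`. -/
def SimpleGraph.IsHopDominatingSet {V : Type*} (G : SimpleGraph V) (S : Finset V) : Prop :=
  ∀ v : V, v ∉ S → ∃ u ∈ S, G.dist u v = 2

/-- The hop domination number of `G`: the minimum cardinality of a hop dominating set. -/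
noncomputable def SimpleGraph.hopDominationNumber {V : Type*} [Fintype V] [DecidableEq V]
    (G : SimpleGraph V) : ℕ :=
  sInf {k : ℕ | ∃ S : Finset V, G.IsHopDominatingSet S ∧ S.card = k}

theorem hop_domination_hamiltonian_path {V : Type*} [Fintype V] [DecidableEq V]
    (G : SimpleGraph V) (htf : G.CliqueFree 3)
    (hham : ∃ (u v : V) (p : G.Walk u v), p.IsHamiltonian) :
    G.hopDominationNumber ≤
      (Fintype.card V / 2 + 2) / 3 + ((Fintype.card V + 1) / 2 + 2) / 3 := by
  classical
  obtain ⟨u, v, p, hp⟩ := hham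
  set n := Fintype.card V with hn
  have hn1 : 1 ≤ n := Fintype.card_pos_iff.mpr ⟨u⟩
  have hplen : p.length = n - 1 := hp.length_eq
  have hpath : p.IsPath := hp.isPath
  have hinj := getVert_injOn_aux p hpath
  -- the selected index set
  set T : Finset ℕ := (Finset.range n).filter
    (fun j => (j/2) % 3 = 1 ∨
      (((n + 1 - j % 2)/2) % 3 = 1 ∧ j/2 + 1 = (n + 1 - j % 2)/2)) with hT
  set S : Finset V := T.image p.getVert with hS
  -- distance-two fact
  have key : ∀ a, a + 2 ≤ p.length → G.dist (p.getVert a) (p.getVert (a+2)) = 2 := by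
    intro a ha
    have h1 : G.Adj (p.getVert a) (p.getVert (a+1)) := p.adj_getVert_succ (by omega)
    have h2 : G.Adj (p.getVert (a+1)) (p.getVert (a+2)) := p.adj_getVert_succ (by omega)
    have hne : p.getVert a ≠ p.getVert (a+2) := fun h => by
      have := hinj a (a+2) (by omega) (by omega) h; omega
    have hnadj : ¬ G.Adj (p.getVert a) (p.getVert (a+2)) := by
      intro hadj
      exact htf {p.getVert a, p.getVert (a+1), p.getVert (a+2)}
        (SimpleGraph.is3Clique_triple_iff.mpr ⟨h1, hadj, h2⟩)
    have hle : G.dist (p.getVert a) (p.getVert (a+2)) ≤ 2 := by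
      have := G.dist_le (SimpleGraph.Walk.cons h1 (SimpleGraph.Walk.cons h2 SimpleGraph.Walk.nil))
      simpa using this
    have h0 : G.dist (p.getVert a) (p.getVert (a+2)) ≠ 0 := by
      intro h
      rcases SimpleGraph.dist_eq_zero_iff_eq_or_not_reachable.mp h with h' | h'
      · exact hne h'
      · exact h' ⟨SimpleGraph.Walk.cons h1 (SimpleGraph.Walk.cons h2 SimpleGraph.Walk.nil)⟩
    have hone : G.dist (p.getVert a) (p.getVert (a+2)) ≠ 1 := fun h =>
      hnadj (SimpleGraph.dist_eq_one_iff_adj.mp h)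
    omega
  -- S is hop dominating
  have hdom : G.IsHopDominatingSet S := by
    intro w hw
    obtain ⟨j, hjv, hjle⟩ := SimpleGraph.Walk.mem_support_iff_exists_getVert.mp
      (hp.mem_support w)
    have hjn : j < n := by omega
    have hmemS : ∀ k, k < n → ((k/2) % 3 = 1 ∨
        (((n + 1 - k % 2)/2) % 3 = 1 ∧ k/2 + 1 = (n + 1 - k % 2)/2)) →
        p.getVert k ∈ S := by
      intro k hk hsel
      exact Finset.mem_image.mpr ⟨k, Finset.mem_filter.mpr ⟨Finset.mem_range.mpr hk, hsel⟩, rfl⟩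
    have hnotsel : ¬ ((j/2) % 3 = 1 ∨
        (((n + 1 - j % 2)/2) % 3 = 1 ∧ j/2 + 1 = (n + 1 - j % 2)/2)) := by
      intro hsel
      exact hw (hjv ▸ hmemS j hjn hsel)
    push_neg at hnotsel
    -- find a selected neighbour index k with |k - j| = 2
    have hkex : ∃ k, k < n ∧ ((k/2) % 3 = 1 ∨
        (((n + 1 - k % 2)/2) % 3 = 1 ∧ k/2 + 1 = (n + 1 - k % 2)/2)) ∧
        (k + 2 = j ∨ j + 2 = k) := by
      by_cases h2 : j / 2 % 3 = 2
      · exact ⟨j - 2, by omega, Or.inl (by omega), by omega⟩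
      · refine ⟨j + 2, by omega, Or.inl (by omega), by omega⟩
    obtain ⟨k, hkn, hksel, hkoff⟩ := hkex
    refine ⟨p.getVert k, hmemS k hkn hksel, ?_⟩
    rcases hkoff with h | h
    · rw [← hjv, ← h]
      exact key k (by omega)
    · rw [← hjv, SimpleGraph.dist_comm, ← h]
      exact key j (by omega)
  -- the cardinality bound
  have hTcard : T.card ≤ (n / 2 + 2) / 3 + ((n + 1) / 2 + 2) / 3 := by
    have := Finset.card_le_card_of_injOn
      (f := fun j => if j % 2 = 0 then (j/2+1)/3 else ((n + 1) / 2 + 2) / 3 + (j/2+1)/3)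
      (s := T) (t := Finset.range ((n / 2 + 2) / 3 + ((n + 1) / 2 + 2) / 3))
      ?_ ?_
    · simpa using this
    · intro j hj
      simp only [hT, Finset.mem_coe, Finset.mem_filter, Finset.mem_range] at hj
      by_cases hpar : j % 2 = 0
      · simp only [if_pos hpar, Finset.mem_coe, Finset.mem_range]
        omega
      · simp only [if_neg hpar, Finset.mem_coe, Finset.mem_range]
        omega
    · intro j hj j' hj' heq
      simp only [hT, Finset.coe_filter, Finset.mem_range, Set.mem_setOf_eq] at hj hj'
      by_cases hpar : j % 2 = 0 <;> by_cases hpar' : j' % 2 = 0 <;>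
        simp only [if_pos, if_neg, hpar, hpar', ite_true, ite_false] at heq <;> omega
  have hScard : S.card ≤ (n / 2 + 2) / 3 + ((n + 1) / 2 + 2) / 3 :=
    le_trans Finset.card_image_le hTcard
  have hmem : S.card ∈ {k : ℕ | ∃ S : Finset V, G.IsHopDominatingSet S ∧ S.card = k} :=
    ⟨S, hdom, rfl⟩
  exact le_trans (Nat.sInf_le hmem) hScard
end

section
/- Let G be a triangle-free simple graph on n vertices (n ≥ 3) that contains a Hamiltonian cycle. Then γ_h(G) ≤ 2⌈n/6⌉ if n is even, and γ_h(G) ≤ ⌈n/3⌉ if n is odd. -/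
/-- The `i`-th element of the support of a walk is `getVert i`. -/
private lemma support_getElem_eq {V : Type*} {G : SimpleGraph V} {u v : V} (p : G.Walk u v) :
    ∀ (i : ℕ) (h : i < p.support.length), p.support[i] = p.getVert i := by
  induction p with
  | nil =>
    intro i h
    simp only [SimpleGraph.Walk.support_nil, List.length_singleton] at h
    interval_cases i
    simp [SimpleGraph.Walk.getVert]
  | cons hadj q ih =>
    intro i h
    cases i with
    | zero => simp [SimpleGraph.Walk.support_cons, SimpleGraph.Walk.getVert]
    | succ i =>
      simp only [SimpleGraph.Walk.support_cons, List.length_cons] at h ⊢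
      rw [List.getElem_cons_succ, ih i (by omega)]
      rfl

/-- A dominating set of a path/cycle pattern: a subset `J ⊆ [0, m)` of cardinality at most
`⌈m/3⌉` such that every `k < m` is in `J`, or has its successor (cyclically) in `J`, or its
predecessor (cyclically) in `J`. -/
private lemma cycleDom (m : ℕ) (hm : 1 ≤ m) :
    ∃ J : Finset ℕ, J.card ≤ (m + 2) / 3 ∧ (∀ k ∈ J, k < m) ∧
      ∀ k < m, k ∈ J ∨ (k + 1) % m ∈ J ∨ (k + m - 1) % m ∈ J := by
  refine ⟨(Finset.range ((m + 2) / 3)).image (fun t => min (3 * t + 1) (m - 1)), ?_, ?_, ?_⟩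
  · exact Finset.card_image_le.trans (by simp)
  · intro k hk
    simp only [Finset.mem_image, Finset.mem_range] at hk
    obtain ⟨t, _, rfl⟩ := hk
    omega
  · have hmem : ∀ x, (x ∈ (Finset.range ((m + 2) / 3)).image (fun t => min (3 * t + 1) (m - 1)))
        ↔ ∃ t, t < (m + 2) / 3 ∧ min (3 * t + 1) (m - 1) = x := by
      intro x; simp [Finset.mem_image, Finset.mem_range]
    intro k hk
    rcases (show k % 3 = 0 ∨ k % 3 = 1 ∨ k % 3 = 2 by omega) with h3 | h3 | h3
    · by_cases hk1 : k + 1 < m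
      · right; left
        rw [Nat.mod_eq_of_lt hk1, hmem]
        exact ⟨k / 3, by omega, by omega⟩
      · left
        rw [hmem]
        exact ⟨(m + 2) / 3 - 1, by omega, by omega⟩
    · left
      rw [hmem]
      exact ⟨k / 3, by omega, by omega⟩
    · right; right
      have he : k + m - 1 = (k - 1) + m := by omega
      rw [he, Nat.add_mod_right, Nat.mod_eq_of_lt (by omega), hmem]
      exact ⟨(k - 1) / 3, by omega, by omega⟩

theorem hop_domination_hamiltonian_cycle {V : Type*} [Fintype V] [DecidableEq V]
    (G : SimpleGraph V) (htf : G.CliqueFree 3) (hn : 3 ≤ Fintype.card V)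
    (hham : ∃ (v : V) (p : G.Walk v v), p.IsHamiltonianCycle) :
    (Even (Fintype.card V) →
      G.hopDominationNumber ≤ 2 * ((Fintype.card V + 5) / 6)) ∧
    (Odd (Fintype.card V) →
      G.hopDominationNumber ≤ (Fintype.card V + 2) / 3) := by
  classical
  obtain ⟨v, p, hp⟩ := hham
  set n := Fintype.card V with hncard
  have hlen : p.length = n := hp.length_eq
  have hn0 : 0 < n := by omega
  set f : ℕ → V := fun i => p.getVert (i % n) with hf
  -- `f` agrees with `getVert` on `[0, n]` (with `f n = f 0`).
  have hfn : ∀ i, i ≤ n → f i = p.getVert i := by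
    intro i hi
    show p.getVert (i % n) = p.getVert i
    rcases eq_or_lt_of_le hi with heq | h
    · rw [heq, Nat.mod_self, p.getVert_zero, ← hlen, p.getVert_length]
    · rw [Nat.mod_eq_of_lt h]
  have hper : ∀ a b : ℕ, a % n = b % n → f a = f b := by
    intro a b h
    show p.getVert (a % n) = p.getVert (b % n)
    rw [h]
  -- injectivity of getVert on [1, n]
  have hsupl : p.support.length = n + 1 := by rw [SimpleGraph.Walk.length_support, hlen]
  have hnd : p.support.tail.Nodup := hp.isCycle.support_nodup
  have hinj : ∀ a b : ℕ, 1 ≤ a → a ≤ n → 1 ≤ b → b ≤ n →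
      p.getVert a = p.getVert b → a = b := by
    intro a b ha han hb hbn heq
    have hlt : ∀ c : ℕ, 1 ≤ c → c ≤ n → c - 1 < p.support.tail.length := by
      intro c hc hcn
      rw [List.length_tail, hsupl]
      omega
    have hg : ∀ c : ℕ, (hc : 1 ≤ c) → (hcn : c ≤ n) →
        p.support.tail[c-1]'(hlt c hc hcn) = p.getVert c := by
      intro c hc hcn
      have h1 : c - 1 + 1 < p.support.length := by rw [hsupl]; omega
      have := List.get_tail p.support (c - 1) (hlt c hc hcn) h1
      simp only [List.get_eq_getElem] at this
      rw [this, support_getElem_eq p (c - 1 + 1) h1]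
      congr 1
      omega
    have := (hnd.getElem_inj_iff (hi := hlt a ha han) (hj := hlt b hb hbn)).mp
      (by rw [hg a ha han, hg b hb hbn]; exact heq)
    omega
  -- injectivity of f on [0, n)
  have hfinj : ∀ a b : ℕ, a < n → b < n → f a = f b → a = b := by
    have hval : ∀ a : ℕ, a < n → f a = p.getVert (if a = 0 then n else a) := by
      intro a ha
      split
      · next h =>
        subst h
        rw [hfn 0 (by omega), p.getVert_zero, ← hlen, p.getVert_length]
      · exact hfn a (le_of_lt ha)
    intro a b ha hb heq
    rw [hval a ha, hval b hb] at heq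
    have := hinj (if a = 0 then n else a) (if b = 0 then n else b)
      (by split <;> omega) (by split <;> omega) (by split <;> omega) (by split <;> omega) heq
    split at this <;> split at this <;> omega
  -- surjectivity of f from [0, n)
  have hsurj : ∀ w : V, ∃ j, j < n ∧ f j = w := by
    intro w
    obtain ⟨i, hiw, hi⟩ := SimpleGraph.Walk.mem_support_iff_exists_getVert.mp (hp.mem_support w)
    rw [hlen] at hi
    rcases eq_or_lt_of_le hi with rfl | h
    · refine ⟨0, hn0, ?_⟩
      rw [hfn 0 (by omega), p.getVert_zero, ← hiw, ← hlen, p.getVert_length]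
    · exact ⟨i, h, by rw [hfn i (le_of_lt h)]; exact hiw⟩
  -- adjacency along the cycle
  have hadjf : ∀ i : ℕ, G.Adj (f i) (f (i + 1)) := by
    intro i
    have hj : i % n < n := Nat.mod_lt _ hn0
    show G.Adj (p.getVert (i % n)) (p.getVert ((i + 1) % n))
    by_cases hc : i % n + 1 < n
    · have h1 : (i + 1) % n = i % n + 1 := by
        rw [← Nat.mod_add_mod, Nat.mod_eq_of_lt hc]
      rw [h1]
      exact p.adj_getVert_succ (by omega)
    · have hin : i % n + 1 = n := by omega
      have h0 : (i + 1) % n = 0 := by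
        rw [← Nat.mod_add_mod, hin, Nat.mod_self]
      rw [h0, p.getVert_zero]
      have h2 : p.getVert (i % n + 1) = v := by
        rw [hin, ← hlen, p.getVert_length]
      have h3 := p.adj_getVert_succ (show i % n < p.length by omega)
      rw [h2] at h3
      exact h3
  -- indices at distance d (0 < d < n) map to different vertices
  have hd1 : ∀ i d : ℕ, 0 < d → d < n → ¬ (i % n = (i + d) % n) := by
    intro i d hd hdn h
    have hdvd : n ∣ (i + d) - i := (Nat.modEq_iff_dvd' (by omega)).mp h
    have : (i + d) - i = d := by omega
    rw [this] at hdvd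
    exact absurd (Nat.le_of_dvd hd hdvd) (by omega)
  have hfne : ∀ i d : ℕ, 0 < d → d < n → f i ≠ f (i + d) := by
    intro i d hd hdn heq
    have h1 : f (i % n) = f i := hper _ _ (Nat.mod_mod i n)
    have h2 : f ((i + d) % n) = f (i + d) := hper _ _ (Nat.mod_mod (i + d) n)
    exact hd1 i d hd hdn (hfinj (i % n) ((i + d) % n) (Nat.mod_lt _ hn0) (Nat.mod_lt _ hn0)
      (by rw [h1, h2, heq]))
  -- the key distance fact
  have hdist : ∀ i : ℕ, G.dist (f i) (f (i + 2)) = 2 := by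
    intro i
    have hA : G.Adj (f i) (f (i + 1)) := hadjf i
    have hB : G.Adj (f (i + 1)) (f (i + 2)) := hadjf (i + 1)
    have hle : G.dist (f i) (f (i + 2)) ≤ 2 :=
      SimpleGraph.dist_le (SimpleGraph.Walk.cons hA (SimpleGraph.Walk.cons hB
        SimpleGraph.Walk.nil))
    have hr : G.Reachable (f i) (f (i + 2)) :=
      ⟨SimpleGraph.Walk.cons hA (SimpleGraph.Walk.cons hB SimpleGraph.Walk.nil)⟩
    have hne : f i ≠ f (i + 2) := hfne i 2 (by omega) (by omega)
    have hnadj : ¬ G.Adj (f i) (f (i + 2)) := by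
      intro hadj
      exact htf {f i, f (i + 1), f (i + 2)}
        (SimpleGraph.is3Clique_triple_iff.mpr ⟨hA, hadj, hB⟩)
    have h0 : G.dist (f i) (f (i + 2)) ≠ 0 := fun h => hne (hr.dist_eq_zero_iff.mp h)
    have h1 : G.dist (f i) (f (i + 2)) ≠ 1 := fun h =>
      hnadj (SimpleGraph.dist_eq_one_iff_adj.mp h)
    omega
  -- reduction: a covering index set gives the bound
  have key : ∀ B : ℕ, (∃ I : Finset ℕ, I.card ≤ B ∧
      ∀ j, j < n → (j ∈ I ∨ (j + 2) % n ∈ I ∨ ∃ i ∈ I, (i + 2) % n = j)) →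
      G.hopDominationNumber ≤ B := by
    rintro B ⟨I, hIc, hIcov⟩
    have hdom : G.IsHopDominatingSet (I.image f) := by
      intro w hw
      obtain ⟨j, hj, rfl⟩ := hsurj w
      rcases hIcov j hj with hj1 | hj2 | ⟨i, hi, hieq⟩
      · exact absurd (Finset.mem_image_of_mem f hj1) hw
      · refine ⟨f ((j + 2) % n), Finset.mem_image_of_mem f hj2, ?_⟩
        rw [hper ((j + 2) % n) (j + 2) (Nat.mod_mod (j + 2) n), SimpleGraph.dist_comm]
        exact hdist j
      · refine ⟨f i, Finset.mem_image_of_mem f hi, ?_⟩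
        have : f j = f (i + 2) := by
          rw [← hieq]
          exact hper ((i + 2) % n) (i + 2) (Nat.mod_mod (i + 2) n)
        rw [this]
        exact hdist i
    calc G.hopDominationNumber ≤ (I.image f).card :=
          Nat.sInf_le ⟨I.image f, hdom, rfl⟩
      _ ≤ I.card := Finset.card_image_le
      _ ≤ B := hIc
  constructor
  · -- even case
    intro heven
    obtain ⟨m, hm⟩ : ∃ m, n = 2 * m := by
      obtain ⟨m, hm⟩ := heven
      exact ⟨m, by omega⟩
    obtain ⟨J, hJc, hJlt, hJcov⟩ := cycleDom m (by omega)
    apply key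
    refine ⟨(J.image (fun k => 2 * k)) ∪ (J.image (fun k => 2 * k + 1)), ?_, ?_⟩
    · calc ((J.image (fun k => 2 * k)) ∪ (J.image (fun k => 2 * k + 1))).card
          ≤ (J.image (fun k => 2 * k)).card + (J.image (fun k => 2 * k + 1)).card :=
            Finset.card_union_le _ _
        _ ≤ J.card + J.card := Nat.add_le_add Finset.card_image_le Finset.card_image_le
        _ ≤ 2 * ((n + 5) / 6) := by omega
    · intro j hj
      have hmemI : ∀ x, (x ∈ (J.image (fun k => 2 * k)) ∪ (J.image (fun k => 2 * k + 1)))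
          ↔ (∃ k ∈ J, 2 * k = x) ∨ (∃ k ∈ J, 2 * k + 1 = x) := by
        intro x; simp [Finset.mem_union, Finset.mem_image]
      set k := j / 2 with hk
      set r := j % 2 with hr
      have hkm : k < m := by omega
      have hjk : j = 2 * k + r := by omega
      have hr2 : r < 2 := by omega
      rcases hJcov k hkm with h | h | h
      · left
        rw [hmemI]
        rcases (show r = 0 ∨ r = 1 by omega) with h0 | h0
        · exact Or.inl ⟨k, h, by omega⟩
        · exact Or.inr ⟨k, h, by omega⟩
      · right; left
        by_cases hc : k + 1 < m
        · rw [Nat.mod_eq_of_lt hc] at h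
          have hlt2 : j + 2 < n := by omega
          rw [Nat.mod_eq_of_lt hlt2, hmemI]
          rcases (show r = 0 ∨ r = 1 by omega) with h0 | h0
          · exact Or.inl ⟨k + 1, h, by omega⟩
          · exact Or.inr ⟨k + 1, h, by omega⟩
        · have hkm1 : k + 1 = m := by omega
          rw [hkm1, Nat.mod_self] at h
          have he : (j + 2) % n = r := by
            rw [show j + 2 = n + r by omega, Nat.add_mod_left, Nat.mod_eq_of_lt (by omega)]
          rw [he, hmemI]
          rcases (show r = 0 ∨ r = 1 by omega) with h0 | h0
          · exact Or.inl ⟨0, h, by omega⟩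
          · exact Or.inr ⟨0, h, by omega⟩
      · right; right
        by_cases hc : 1 ≤ k
        · have he : (k + m - 1) % m = k - 1 := by
            rw [show k + m - 1 = (k - 1) + m by omega, Nat.add_mod_right,
              Nat.mod_eq_of_lt (by omega)]
          rw [he] at h
          refine ⟨2 * (k - 1) + r, ?_, ?_⟩
          · rw [hmemI]
            rcases (show r = 0 ∨ r = 1 by omega) with h0 | h0
            · exact Or.inl ⟨k - 1, h, by omega⟩
            · exact Or.inr ⟨k - 1, h, by omega⟩
          · rw [show 2 * (k - 1) + r + 2 = j by omega, Nat.mod_eq_of_lt hj]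
        · have hk0 : k = 0 := by omega
          have he : (k + m - 1) % m = m - 1 := by
            rw [hk0, Nat.zero_add, Nat.mod_eq_of_lt (by omega)]
          rw [he] at h
          refine ⟨2 * (m - 1) + r, ?_, ?_⟩
          · rw [hmemI]
            rcases (show r = 0 ∨ r = 1 by omega) with h0 | h0
            · exact Or.inl ⟨m - 1, h, by omega⟩
            · exact Or.inr ⟨m - 1, h, by omega⟩
          · rw [show 2 * (m - 1) + r + 2 = n + r by omega, Nat.add_mod_left,
              Nat.mod_eq_of_lt (by omega), show r = j by omega]
  · -- odd case
    intro hodd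
    have hn2 : n % 2 = 1 := Nat.odd_iff.mp hodd
    obtain ⟨J, hJc, hJlt, hJcov⟩ := cycleDom n (by omega)
    have hmul : ∀ x : ℕ, (2 * (x % n)) % n = (2 * x) % n := by
      intro x
      rw [Nat.mul_mod 2 (x % n) n, Nat.mod_mod, ← Nat.mul_mod]
    apply key
    refine ⟨J.image (fun k => (2 * k) % n), Finset.card_image_le.trans hJc, ?_⟩
    intro j hj
    have hmemI : ∀ x, (x ∈ J.image (fun k => (2 * k) % n))
        ↔ ∃ k ∈ J, (2 * k) % n = x := by
      intro x; simp [Finset.mem_image]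
    obtain ⟨k, hkn, h2k⟩ : ∃ k, k < n ∧ (2 * k) % n = j := by
      by_cases hje : j % 2 = 0
      · exact ⟨j / 2, by omega, by rw [show 2 * (j / 2) = j by omega, Nat.mod_eq_of_lt hj]⟩
      · refine ⟨(j + n) / 2, by omega, ?_⟩
        rw [show 2 * ((j + n) / 2) = j + n by omega, Nat.add_mod_right, Nat.mod_eq_of_lt hj]
    rcases hJcov k hkn with h | h | h
    · left
      rw [hmemI]
      exact ⟨k, h, h2k⟩
    · right; left
      rw [hmemI]
      refine ⟨(k + 1) % n, h, ?_⟩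
      rw [hmul (k + 1), ← h2k, Nat.mod_add_mod, show 2 * k + 2 = 2 * (k + 1) by ring]
    · right; right
      refine ⟨(2 * ((k + n - 1) % n)) % n, by rw [hmemI]; exact ⟨(k + n - 1) % n, h, rfl⟩, ?_⟩
      have e : (2 * ((k + n - 1) % n) + 2) % n = (2 * (k + n - 1) + 2) % n := by
        conv_lhs => rw [← Nat.mod_add_mod]
        conv_rhs => rw [← Nat.mod_add_mod]
        rw [hmul]
      rw [Nat.mod_add_mod, e, show 2 * (k + n - 1) + 2 = 2 * k + n + n by omega,
        Nat.add_mod_right, Nat.add_mod_right, h2k]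
end
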